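/- arXiv:2401.02353 — 2 statements merged into one kernel-verified Lean document; each statement's English description precedes it below -/
import Mathlib

section
/- If player B has a weakly dominant pure strategy x*_B in Γ, then there is no contract D_A such that in every Nash equilibrium (σ_A, σ_B) of Γ(D_A), both player A's payoff σ_A^T (U_A - D_A) σ_B strictly exceeds A's payoff in some Nash equilibrium of Γ with B playing x*_B, and the transfer σ_A^T D_A σ_B is strictly positive. -/
open Finset

/-- Mixed strategies over `n` pure strategies: nonnegative vectors summing to 1. -/
def mixed (n : ℕ) : Set (Fin n → ℝ) := {σ | (∀ i, 0 ≤ σ i) ∧ ∑ i, σ i = 1}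

/-- Expected payoff `σ_A^T U σ_B`. -/
def pay {m n : ℕ} (U : Fin m → Fin n → ℝ) (a : Fin m → ℝ) (b : Fin n → ℝ) : ℝ :=
  ∑ i, ∑ j, a i * U i j * b j

/-- The pure strategy `k` as a mixed strategy. -/
def pureStrat {n : ℕ} (k : Fin n) : Fin n → ℝ := fun i => if i = k then 1 else 0

/-- `b` is a best response of the column player (payoffs `UB`) to `a`. -/
def BRB {m n : ℕ} (UB : Fin m → Fin n → ℝ) (a : Fin m → ℝ) (b : Fin n → ℝ) : Prop :=
  b ∈ mixed n ∧ ∀ b' ∈ mixed n, pay UB a b' ≤ pay UB a b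

/-- `a` is a best response of the row player (payoffs `UA`) to `b`. -/
def BRA {m n : ℕ} (UA : Fin m → Fin n → ℝ) (a : Fin m → ℝ) (b : Fin n → ℝ) : Prop :=
  a ∈ mixed m ∧ ∀ a' ∈ mixed m, pay UA a' b ≤ pay UA a b

/-- Nash equilibrium of the bimatrix game `(UA, UB)`. -/
def NashEq {m n : ℕ} (UA UB : Fin m → Fin n → ℝ) (a : Fin m → ℝ) (b : Fin n → ℝ) : Prop :=
  a ∈ mixed m ∧ b ∈ mixed n ∧
  (∀ a' ∈ mixed m, pay UA a' b ≤ pay UA a b) ∧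
  (∀ b' ∈ mixed n, pay UB a b' ≤ pay UB a b)

lemma pureStrat_mixed {n : ℕ} (k : Fin n) : pureStrat k ∈ mixed n := by
  constructor
  · intro i; unfold pureStrat; split <;> norm_num
  · simp [pureStrat]

lemma pay_eq {m n : ℕ} (U : Fin m → Fin n → ℝ) (a : Fin m → ℝ) (b : Fin n → ℝ) :
    pay U a b = ∑ i, a i * (∑ j, U i j * b j) := by
  unfold pay
  congr 1; funext i
  rw [Finset.mul_sum]
  congr 1; funext j; ring

lemma pay_pure_left {m n : ℕ} (U : Fin m → Fin n → ℝ) (k : Fin m) (b : Fin n → ℝ) :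
    pay U (pureStrat k) b = ∑ j, U k j * b j := by
  rw [pay_eq]
  simp [pureStrat]

lemma pay_sub {m n : ℕ} (U D : Fin m → Fin n → ℝ) (a : Fin m → ℝ) (b : Fin n → ℝ) :
    pay (U - D) a b = pay U a b - pay D a b := by
  unfold pay
  rw [← Finset.sum_sub_distrib]
  congr 1; funext i
  rw [← Finset.sum_sub_distrib]
  congr 1; funext j
  simp [Pi.sub_apply]; ring

lemma exists_pure_best {m n : ℕ} [NeZero m] (U : Fin m → Fin n → ℝ) (b : Fin n → ℝ) :
    ∃ k : Fin m, ∀ a' ∈ mixed m, pay U a' b ≤ pay U (pureStrat k) b := by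
  obtain ⟨k, -, hk⟩ := Finset.exists_max_image Finset.univ
    (fun i => ∑ j, U i j * b j) ⟨⟨0, Nat.pos_of_ne_zero (NeZero.ne m)⟩, Finset.mem_univ _⟩
  refine ⟨k, fun a' ha' => ?_⟩
  rw [pay_eq, pay_pure_left]
  calc ∑ i, a' i * (∑ j, U i j * b j)
      ≤ ∑ i, a' i * (∑ j, U k j * b j) := by
        apply Finset.sum_le_sum
        intro i _
        exact mul_le_mul_of_nonneg_left (hk i (Finset.mem_univ _)) (ha'.1 i)
    _ = ∑ j, U k j * b j := by
        rw [← Finset.sum_mul, ha'.2, one_mul]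

/-- Proposition 4: if B has a weakly dominant pure strategy `xB` and `(xA, xB)` is a pure
Nash equilibrium of `Γ`, there is no contract `DA` such that in every Nash equilibrium of
`Γ(D_A)` both A strictly gains relative to that equilibrium of `Γ` and the miner's
expected transfer is strictly positive. -/
theorem stmt_2 {m n : ℕ} (UA UB : Fin m → Fin n → ℝ) (xB : Fin n)
    (hdom : ∀ a ∈ mixed m, ∀ b ∈ mixed n, pay UB a b ≤ pay UB a (pureStrat xB))
    (xA : Fin m) (hne : NashEq UA UB (pureStrat xA) (pureStrat xB)) :
    ¬ ∃ DA : Fin m → Fin n → ℝ, ∀ (a : Fin m → ℝ) (b : Fin n → ℝ),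
        NashEq (UA - DA) UB a b →
          pay (UA - DA) a b > pay UA (pureStrat xA) (pureStrat xB) ∧
          pay DA a b > 0 := by
  rintro ⟨DA, h⟩
  have : NeZero m := ⟨Nat.pos_iff_ne_zero.mp xA.pos⟩
  obtain ⟨k, hk⟩ := exists_pure_best (UA - DA) (pureStrat xB)
  have hNE : NashEq (UA - DA) UB (pureStrat k) (pureStrat xB) :=
    ⟨pureStrat_mixed k, pureStrat_mixed xB, hk,
      fun b' hb' => hdom (pureStrat k) (pureStrat_mixed k) b' hb'⟩
  obtain ⟨h1, h2⟩ := h _ _ hNE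
  have h3 : pay UA (pureStrat k) (pureStrat xB) ≤ pay UA (pureStrat xA) (pureStrat xB) :=
    hne.2.2.1 _ (pureStrat_mixed k)
  rw [pay_sub] at h1
  linarith
end

section
/- In the 2×2 game with A's payoffs [[1,2],[0,1]] and B's payoffs [[.5,0],[0,1]], there is NO contract D_A with all equilibrium transfers nonnegative such that Γ(D_A) has a unique Nash equilibrium achieving the maxagg aggregate payoff 5/3 exactly; however, for every ε > 0 there is a contract D_A(ε) with a unique Nash equilibrium whose aggregate payoff σ_A^T U_A σ_B exceeds 5/3 − ε. -/
open Finset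

lemma pay2 (U : Fin 2 → Fin 2 → ℝ) (a b : Fin 2 → ℝ) :
    pay U a b = a 0 * U 0 0 * b 0 + a 0 * U 0 1 * b 1 + a 1 * U 1 0 * b 0 + a 1 * U 1 1 * b 1 := by
  simp [pay, Fin.sum_univ_two]; ring
lemma mixed2 {σ : Fin 2 → ℝ} (h : σ ∈ mixed 2) : 0 ≤ σ 0 ∧ 0 ≤ σ 1 ∧ σ 0 + σ 1 = 1 :=
  ⟨h.1 0, h.1 1, by simpa [Fin.sum_univ_two] using h.2⟩
lemma mem_mixed2 {σ : Fin 2 → ℝ} (h0 : 0 ≤ σ 0) (h1 : 0 ≤ σ 1) (hs : σ 0 + σ 1 = 1) :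
    σ ∈ mixed 2 :=
  ⟨fun i => by fin_cases i <;> assumption, by simpa [Fin.sum_univ_two]⟩
lemma pureMem (k : Fin 2) : pureStrat k ∈ mixed 2 := by
  refine ⟨fun i => by simp [pureStrat]; split <;> norm_num, ?_⟩
  fin_cases k <;> simp [pureStrat, Fin.sum_univ_two]

noncomputable def UAe : Fin 2 → Fin 2 → ℝ := ![![1, 2], ![0, 1]]
noncomputable def UBe : Fin 2 → Fin 2 → ℝ := ![![1/2, 0], ![0, 1]]

lemma part1 :
    ¬ ∃ DA : Fin 2 → Fin 2 → ℝ,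
      (∀ (a : Fin 2 → ℝ) (b : Fin 2 → ℝ), NashEq (UAe - DA) UBe a b → 0 ≤ pay DA a b) ∧
      ∃ (a : Fin 2 → ℝ) (b : Fin 2 → ℝ), NashEq (UAe - DA) UBe a b ∧
        pay UAe a b = 5/3 ∧
        (∀ (a' : Fin 2 → ℝ) (b' : Fin 2 → ℝ),
          NashEq (UAe - DA) UBe a' b' → a' = a ∧ b' = b) := by
  rintro ⟨DA, -, a, b, ⟨haM, hbM, hA, hB⟩, hpay, huniq⟩
  obtain ⟨ha0, ha1, has⟩ := mixed2 haM
  obtain ⟨hb0, hb1, hbs⟩ := mixed2 hbM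
  rw [pay2] at hpay
  simp only [UAe] at hpay
  norm_num at hpay
  -- hpay should now say: a 0 * b 0 + 2 * (a 0 * b 1) + a 1 * b 1 = 5/3 (in some form)
  have hBp1 := hB (pureStrat 1) (pureMem 1)
  have hBp0 := hB (pureStrat 0) (pureMem 0)
  rw [pay2, pay2] at hBp0 hBp1
  simp only [UBe, pureStrat] at hBp0 hBp1
  norm_num at hBp0 hBp1
  -- derive b 0 = 0 and a 0 = 2/3
  have hp : a 0 = 2/3 + b 0 := by nlinarith [hpay]
  have hq : b 0 = 0 := by
    have hb13 : b 0 ≤ 1/3 := by linarith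
    nlinarith [hBp0, mul_nonneg hb0 hb0]
  have hpa : a 0 = 2/3 := by linarith
  have hb1' : b 1 = 1 := by linarith
  -- A indifference
  have hAp0 := hA (pureStrat 0) (pureMem 0)
  have hAp1 := hA (pureStrat 1) (pureMem 1)
  rw [pay2, pay2] at hAp0 hAp1
  simp only [pureStrat] at hAp0 hAp1
  norm_num [UAe, hq, hb1', hpa] at hAp0 hAp1
  have ha1' : a 1 = 1/3 := by linarith
  rw [ha1'] at hAp0 hAp1
  have hv : 2 - DA 0 1 = 1 - DA 1 1 := by linarith
  -- (pureStrat 1, b) is also a Nash equilibrium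
  have NE2 : NashEq (UAe - DA) UBe (pureStrat 1) b := by
    refine ⟨pureMem 1, hbM, ?_, ?_⟩
    · intro a' ha'
      obtain ⟨ha'0, ha'1, ha's⟩ := mixed2 ha'
      rw [pay2, pay2]
      simp only [pureStrat, Pi.sub_apply, hq, hb1']
      norm_num [UAe]
      have heq : a' 0 * (2 - DA 0 1) + a' 1 * (1 - DA 1 1) = 1 - DA 1 1 := by
        linear_combination a' 0 * hv + (1 - DA 1 1) * ha's
      linarith
    · intro b' hb'
      obtain ⟨hb'0, hb'1, hb's⟩ := mixed2 hb'
      rw [pay2, pay2]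
      simp only [pureStrat, UBe, hq, hb1']
      norm_num
      linarith
  obtain ⟨hae, -⟩ := huniq _ _ NE2
  have h0 := congrFun hae 0
  simp [pureStrat, hpa] at h0
  exact absurd h0 (by norm_num)

set_option maxHeartbeats 2000000 in
lemma part2 : ∀ ε > (0:ℝ), ∃ DA : Fin 2 → Fin 2 → ℝ,
    ∃ (a : Fin 2 → ℝ) (b : Fin 2 → ℝ), NashEq (UAe - DA) UBe a b ∧
      (∀ (a' : Fin 2 → ℝ) (b' : Fin 2 → ℝ),
        NashEq (UAe - DA) UBe a' b' → a' = a ∧ b' = b) ∧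
      pay UAe a b > 5/3 - ε := by
  intro ε hε
  obtain ⟨q, hq0, hq12, hqε⟩ : ∃ q : ℝ, 0 < q ∧ q ≤ 1/2 ∧ q < ε := by
    refine ⟨min ε 1 / 2, by positivity, ?_, ?_⟩
    · have := min_le_right ε 1; linarith
    · have h1 := min_le_left ε 1
      have h2 := min_le_right ε 1
      rcases le_total ε 1 with h | h
      · rw [min_eq_left h]; linarith
      · linarith
  have h1q : (0:ℝ) < 1 - q := by linarith
  obtain ⟨e, he0, key⟩ : ∃ e : ℝ, 0 < e ∧ 2 * e * (1 - q) = q := by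
    refine ⟨q / (2 * (1 - q)), by positivity, ?_⟩
    field_simp
  have key2 : 2 * e = q * (1 + 2 * e) := by nlinarith [key]
  refine ⟨![![3/2, 1/2 - e], ![0, -1/2]], ![2/3, 1/3], ![q, 1 - q], ?_, ?_, ?_⟩
  · -- Nash equilibrium
    refine ⟨mem_mixed2 (by norm_num) (by norm_num) (by norm_num),
      mem_mixed2 (by simp; linarith) (by simp; linarith) (by simp), ?_, ?_⟩
    · intro a' ha'
      obtain ⟨ha'0, ha'1, ha's⟩ := mixed2 ha'
      rw [pay2, pay2]
      simp only [Pi.sub_apply, UAe]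
      norm_num
      have heq : a' 0 * (-(1/2)) * q + a' 0 * (3/2 + e) * (1 - q) + a' 1 * (3/2) * (1 - q)
          = (2/3) * (-(1/2)) * q + (2/3) * (3/2 + e) * (1 - q) + (1/3) * (3/2) * (1 - q) := by
        linear_combination ((a' 0 - 2/3)/2) * key + (3/2) * (1 - q) * ha's
      linarith [heq]
    · intro b' hb'
      obtain ⟨hb'0, hb'1, hb's⟩ := mixed2 hb'
      rw [pay2, pay2]
      simp only [UBe]
      norm_num
      nlinarith [hb's]
  · -- uniqueness
    rintro a' b' ⟨haM', hbM', hA', hB'⟩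
    obtain ⟨hp0, hp1, hps⟩ := mixed2 haM'
    obtain ⟨hr0, hr1, hrs⟩ := mixed2 hbM'
    have hB'0 := hB' (pureStrat 0) (pureMem 0)
    have hB'1 := hB' (pureStrat 1) (pureMem 1)
    have hA'0 := hA' (pureStrat 0) (pureMem 0)
    have hA'1 := hA' (pureStrat 1) (pureMem 1)
    rw [pay2, pay2] at hB'0 hB'1 hA'0 hA'1
    simp only [Pi.sub_apply, UAe, UBe, pureStrat] at hB'0 hB'1 hA'0 hA'1
    norm_num at hB'0 hB'1 hA'0 hA'1
    set p := a' 0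
    set r := b' 0
    have hp1' : a' 1 = 1 - p := by linarith
    have hr1' : b' 1 = 1 - r := by linarith
    rw [hp1', hr1'] at hB'0 hB'1 hA'0 hA'1
    -- h1 : (1-r)*(2-3p) ≥ 0 ; h2 : r*(3p-2) ≥ 0
    have h1 : 0 ≤ (1 - r) * (2 - 3 * p) := by nlinarith [hB'0]
    have h2 : 0 ≤ r * (3 * p - 2) := by nlinarith [hB'1]
    have h3 : 0 ≤ (1 - p) * (r * (1 + 2 * e) - 2 * e) := by nlinarith [hA'0]
    have h4 : 0 ≤ p * (2 * e - r * (1 + 2 * e)) := by nlinarith [hA'1]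
    have hp23 : p = 2/3 := by
      rcases lt_trichotomy p (2/3) with h | h | h
      · exfalso
        have hr : r = 0 := by
          rcases hr0.eq_or_lt with h' | h'
          · exact h'.symm
          · exfalso
            nlinarith [h2, mul_pos h' (show (0:ℝ) < 2 - 3 * p by linarith)]
        rw [hr] at h3
        nlinarith [h3, mul_pos (show (0:ℝ) < 1 - p by linarith) he0]
      · exact h
      · exfalso
        have hrle : r ≤ 1 := by linarith
        have hr : r = 1 := by
          rcases eq_or_lt_of_le hrle with h' | h'
          · exact h'
          · exfalso
            nlinarith [h1, mul_pos (show (0:ℝ) < 1 - r by linarith)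
              (show (0:ℝ) < 3 * p - 2 by linarith)]
        rw [hr] at h4
        nlinarith [h4]
    have hrq : r = q := by
      rw [hp23] at h3 h4
      have h5 : r * (1 + 2 * e) = 2 * e := by nlinarith [h3, h4]
      have h6 : r * (1 + 2 * e) = q * (1 + 2 * e) := by linarith [h5, key2]
      exact mul_right_cancel₀ (by positivity : (1:ℝ) + 2 * e ≠ 0) h6
    constructor
    · funext i; fin_cases i <;> simp <;> linarith [hp23, hp1']
    · funext i; fin_cases i <;> simp <;> linarith [hrq, hr1']
  · -- payoff
    rw [pay2]
    simp only [UAe]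
    norm_num
    nlinarith [hqε]

/-- In the game `U_A = [[1,2],[0,1]]`, `U_B = [[1/2,0],[0,1]]`: no contract with
nonnegative equilibrium transfers yields a unique Nash equilibrium attaining the maxagg
`5/3` exactly; but for every `ε > 0` some contract yields a unique Nash equilibrium whose
aggregate payoff exceeds `5/3 − ε`. -/
theorem stmt_19 :
    let UA : Fin 2 → Fin 2 → ℝ := ![![1, 2], ![0, 1]]
    let UB : Fin 2 → Fin 2 → ℝ := ![![1/2, 0], ![0, 1]]
    (¬ ∃ DA : Fin 2 → Fin 2 → ℝ,
      (∀ (a : Fin 2 → ℝ) (b : Fin 2 → ℝ), NashEq (UA - DA) UB a b → 0 ≤ pay DA a b) ∧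
      ∃ (a : Fin 2 → ℝ) (b : Fin 2 → ℝ), NashEq (UA - DA) UB a b ∧
        pay UA a b = 5/3 ∧
        (∀ (a' : Fin 2 → ℝ) (b' : Fin 2 → ℝ),
          NashEq (UA - DA) UB a' b' → a' = a ∧ b' = b)) ∧
    (∀ ε > (0:ℝ), ∃ DA : Fin 2 → Fin 2 → ℝ,
      ∃ (a : Fin 2 → ℝ) (b : Fin 2 → ℝ), NashEq (UA - DA) UB a b ∧
        (∀ (a' : Fin 2 → ℝ) (b' : Fin 2 → ℝ),
          NashEq (UA - DA) UB a' b' → a' = a ∧ b' = b) ∧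
        pay UA a b > 5/3 - ε) := by
  intro UA UB
  exact ⟨part1, part2⟩
end
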